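/- Let n, m, p ∈ ℕ with p > n and p > m, and let s = (s_x,s_y), t = (t_x,t_y) be distinct vertices of the n×m grid graph G_{n×m} with s_x ≤ t_x and s_y ≤ t_y. Then every family of p s-t paths in G_{n×m} has at least (t_x − s_x) + (t_y − s_y) shared edges, i.e., at least as many shared edges as the graph distance between s and t. -/

import Mathlib

/-- The `n × m` grid graph: vertices are pairs `(x, y)` of naturals with `x < n`
and `y < m`, and two vertices are adjacent iff they are at Manhattan distance 1. -/
def gridGraph (n m : ℕ) : SimpleGraph (ℕ × ℕ) where
  Adj u v := u.1 < n ∧ u.2 < m ∧ v.1 < n ∧ v.2 < m ∧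
    ((u.1 : ℤ) - v.1).natAbs + ((u.2 : ℤ) - v.2).natAbs = 1
  symm := by
    constructor
    rintro u v ⟨h1, h2, h3, h4, h5⟩
    exact ⟨h3, h4, h1, h2, by omega⟩
  loopless := by
    constructor
    rintro u ⟨-, -, -, -, h⟩
    omega

/-- The set of shared edges of a family of `s`-`t` walks (an edge is shared if it
occurs in two walks with distinct indices). -/
def sharedEdges {V : Type*} {G : SimpleGraph V} {s t : V} {p : ℕ}
    (P : Fin p → G.Walk s t) : Set (Sym2 V) :=
  {e | ∃ i j, i ≠ j ∧ e ∈ (P i).edges ∧ e ∈ (P j).edges}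

/-- On a `p`-small grid (`p > n`, `p > m`), every family of `p` `s`-`t` paths
has at least `(t.1 - s.1) + (t.2 - s.2)` shared edges (which is the graph
distance between `s` and `t`). -/
lemma gridAdj {n m : ℕ} {u v : ℕ × ℕ} (h : (gridGraph n m).Adj u v) :
    u.1 < n ∧ u.2 < m ∧ v.1 < n ∧ v.2 < m ∧
    ((u.1 : ℤ) - v.1).natAbs + ((u.2 : ℤ) - v.2).natAbs = 1 := h

lemma crossH {n m : ℕ} : ∀ {a b : ℕ × ℕ} (W : (gridGraph n m).Walk a b) (x : ℕ),
    a.1 ≤ x → x < b.1 → ∃ y, s((x, y), (x + 1, y)) ∈ W.edges := by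
  intro a b W
  induction W with
  | nil => intro x h1 h2; omega
  | cons h w ih =>
    intro x h1 h2
    rename_i u v c
    by_cases hc : v.1 ≤ x
    · obtain ⟨y, hy⟩ := ih x hc h2
      exact ⟨y, List.mem_cons_of_mem _ hy⟩
    · obtain ⟨-, -, -, -, h5⟩ := gridAdj h
      have hu : u = (x, u.2) := Prod.ext (by omega) rfl
      have hv : v = (x + 1, u.2) := Prod.ext (by omega) (by omega)
      refine ⟨u.2, ?_⟩
      rw [SimpleGraph.Walk.edges_cons, ← hu, ← hv]
      exact List.mem_cons_self

lemma crossV {n m : ℕ} : ∀ {a b : ℕ × ℕ} (W : (gridGraph n m).Walk a b) (y : ℕ),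
    a.2 ≤ y → y < b.2 → ∃ x, s((x, y), (x, y + 1)) ∈ W.edges := by
  intro a b W
  induction W with
  | nil => intro y h1 h2; omega
  | cons h w ih =>
    intro y h1 h2
    rename_i u v c
    by_cases hc : v.2 ≤ y
    · obtain ⟨x, hx⟩ := ih y hc h2
      exact ⟨x, List.mem_cons_of_mem _ hx⟩
    · obtain ⟨-, -, -, -, h5⟩ := gridAdj h
      have hu : u = (u.1, y) := Prod.ext rfl (by omega)
      have hv : v = (u.1, y + 1) := Prod.ext (by omega) (by omega)
      refine ⟨u.1, ?_⟩
      rw [SimpleGraph.Walk.edges_cons, ← hu, ← hv]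
      exact List.mem_cons_self

theorem stmt4 (n m p : ℕ) (hn : n < p) (hm : m < p)
    (s t : ℕ × ℕ) (hst : s ≠ t)
    (hs : s.1 < n ∧ s.2 < m) (ht : t.1 < n ∧ t.2 < m)
    (hx : s.1 ≤ t.1) (hy : s.2 ≤ t.2)
    (P : Fin p → (gridGraph n m).Walk s t) (hP : ∀ i, (P i).IsPath) :
    (t.1 - s.1) + (t.2 - s.2) ≤ (sharedEdges P).ncard := by
  classical
  -- shared crossing edge at each vertical cut
  have key1 : ∀ x : ℕ, ∃ y : ℕ, s.1 ≤ x → x < t.1 →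
      s((x, y), (x + 1, y)) ∈ sharedEdges P := by
    intro x
    by_cases hxr : s.1 ≤ x ∧ x < t.1
    · obtain ⟨hx1, hx2⟩ := hxr
      have hc : ∀ i : Fin p, ∃ y : ℕ, y < m ∧ s((x, y), (x + 1, y)) ∈ (P i).edges := by
        intro i
        obtain ⟨y, hy⟩ := crossH (P i) x hx1 hx2
        have hadj := gridAdj ((P i).adj_of_mem_edges hy)
        exact ⟨y, hadj.2.1, hy⟩
      choose f hf1 hf2 using hc
      obtain ⟨i, -, j, -, hij, hfij⟩ :=
        Finset.exists_ne_map_eq_of_card_lt_of_maps_to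
          (s := (Finset.univ : Finset (Fin p))) (t := Finset.range m)
          (by simpa using hm) (fun i _ => Finset.mem_range.mpr (hf1 i))
      exact ⟨f i, fun _ _ => ⟨i, j, hij, hf2 i, by rw [hfij]; exact hf2 j⟩⟩
    · exact ⟨0, fun h1 h2 => absurd ⟨h1, h2⟩ hxr⟩
  have key2 : ∀ y : ℕ, ∃ x : ℕ, s.2 ≤ y → y < t.2 →
      s((x, y), (x, y + 1)) ∈ sharedEdges P := by
    intro y
    by_cases hyr : s.2 ≤ y ∧ y < t.2
    · obtain ⟨hy1, hy2⟩ := hyr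
      have hc : ∀ i : Fin p, ∃ x : ℕ, x < n ∧ s((x, y), (x, y + 1)) ∈ (P i).edges := by
        intro i
        obtain ⟨x', hx'⟩ := crossV (P i) y hy1 hy2
        have hadj := gridAdj ((P i).adj_of_mem_edges hx')
        exact ⟨x', hadj.1, hx'⟩
      choose f hf1 hf2 using hc
      obtain ⟨i, -, j, -, hij, hfij⟩ :=
        Finset.exists_ne_map_eq_of_card_lt_of_maps_to
          (s := (Finset.univ : Finset (Fin p))) (t := Finset.range n)
          (by simpa using hn) (fun i _ => Finset.mem_range.mpr (hf1 i))
      exact ⟨f i, fun _ _ => ⟨i, j, hij, hf2 i, by rw [hfij]; exact hf2 j⟩⟩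
    · exact ⟨0, fun h1 h2 => absurd ⟨h1, h2⟩ hyr⟩
  choose g1 hg1 using key1
  choose g2 hg2 using key2
  set F1 : Finset (Sym2 (ℕ × ℕ)) :=
    (Finset.Ico s.1 t.1).image (fun x => s((x, g1 x), (x + 1, g1 x))) with hF1
  set F2 : Finset (Sym2 (ℕ × ℕ)) :=
    (Finset.Ico s.2 t.2).image (fun y => s((g2 y, y), (g2 y, y + 1))) with hF2
  have hcard1 : F1.card = t.1 - s.1 := by
    rw [hF1, Finset.card_image_of_injOn, Nat.card_Ico]
    intro a _ b _ hab
    rw [Sym2.eq_iff] at hab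
    rcases hab with ⟨h1, -⟩ | ⟨h1, h2⟩ <;>
      simp only [Prod.mk.injEq] at * <;> omega
  have hcard2 : F2.card = t.2 - s.2 := by
    rw [hF2, Finset.card_image_of_injOn, Nat.card_Ico]
    intro a _ b _ hab
    rw [Sym2.eq_iff] at hab
    rcases hab with ⟨h1, -⟩ | ⟨h1, h2⟩ <;>
      simp only [Prod.mk.injEq] at * <;> omega
  have hdisj : Disjoint F1 F2 := by
    rw [Finset.disjoint_left]
    intro e he1 he2
    rw [hF1, Finset.mem_image] at he1
    rw [hF2, Finset.mem_image] at he2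
    obtain ⟨a, -, ha⟩ := he1
    obtain ⟨b, -, hb⟩ := he2
    rw [← ha, Sym2.eq_iff] at hb
    rcases hb with ⟨h1, h2⟩ | ⟨h1, h2⟩ <;>
      simp only [Prod.mk.injEq] at * <;> omega
  have hsub : ↑(F1 ∪ F2) ⊆ sharedEdges P := by
    intro e he
    rw [Finset.coe_union, Set.mem_union] at he
    rcases he with he | he
    · rw [hF1, Finset.coe_image, Set.mem_image] at he
      obtain ⟨a, ha, rfl⟩ := he
      rw [Finset.mem_coe, Finset.mem_Ico] at ha
      exact hg1 a ha.1 ha.2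
    · rw [hF2, Finset.coe_image, Set.mem_image] at he
      obtain ⟨b, hb, rfl⟩ := he
      rw [Finset.mem_coe, Finset.mem_Ico] at hb
      exact hg2 b hb.1 hb.2
  have hfin : (sharedEdges P).Finite := by
    refine Set.Finite.subset (Set.finite_iUnion (fun i : Fin p => (P i).edges.finite_toSet)) ?_
    rintro e ⟨i, j, -, hi, -⟩
    exact Set.mem_iUnion.mpr ⟨i, hi⟩
  calc (t.1 - s.1) + (t.2 - s.2) = (F1 ∪ F2).card := by
        rw [Finset.card_union_of_disjoint hdisj, hcard1, hcard2]
    _ = (↑(F1 ∪ F2) : Set (Sym2 (ℕ × ℕ))).ncard := (Set.ncard_coe_finset _).symm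
    _ ≤ (sharedEdges P).ncard := Set.ncard_le_ncard hsub hfin
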